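/- arXiv:2209.09119 — 2 statements merged into one kernel-verified Lean document; each statement's English description precedes it below -/
import Mathlib

section
/- Let x̄ ∈ S* and q > 0, and suppose the ball B(x̄, δ) lies in 𝒪 for small δ. If ∂F is q-subregular at x̄ for 0, then the residual mapping R is min{q,1}-subregular at x̄ for 0; that is, there exist ν > 0 and δ > 0 such that dist(x, S*) ≤ ν ‖R(x)‖^{min{q,1}} for all x ∈ B(x̄, δ). -/
open Set Metric Filter Bornology
open scoped RealInnerProductSpace Topology ENNReal

noncomputable section

/-- Euclidean space `ℝⁿ`. -/
abbrev Eu (n : ℕ) : Type := EuclideanSpace ℝ (Fin n)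

/-- The convex subdifferential of an extended-real-valued function `g` at `x`. -/
def subdiff {n : ℕ} (g : Eu n → EReal) (x : Eu n) : Set (Eu n) :=
  {v | ∀ z : Eu n, g x + ((⟪v, z - x⟫ : ℝ) : EReal) ≤ g z}

/-- `g` is proper: not identically `+∞` and nowhere `-∞`. -/
def ProperFun {n : ℕ} (g : Eu n → EReal) : Prop :=
  (∃ x, g x ≠ ⊤) ∧ ∀ x, g x ≠ ⊥

/-- `g` is convex. -/
def ConvexFun {n : ℕ} (g : Eu n → EReal) : Prop :=
  ∀ x z : Eu n, ∀ a c : ℝ, 0 ≤ a → 0 ≤ c → a + c = 1 →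
    g (a • x + c • z) ≤ (a : EReal) * g x + (c : EReal) * g z

/-- The effective domain of `g`. -/
def domg {n : ℕ} (g : Eu n → EReal) : Set (Eu n) := {x | g x ≠ ⊤}

/-- `prox` is the proximal mapping of `g` (with parameter 1). -/
def IsProxOf {n : ℕ} (g : Eu n → EReal) (prox : Eu n → Eu n) : Prop :=
  ∀ z u : Eu n,
    ((‖prox z - z‖ ^ 2 / 2 : ℝ) : EReal) + g (prox z)
      ≤ ((‖u - z‖ ^ 2 / 2 : ℝ) : EReal) + g u

/-- `f(x) = ψ(Ax - b)`. -/
def fval {n m : ℕ} (ψ : Eu m → ℝ) (A : Eu n →L[ℝ] Eu m) (b : Eu m) (x : Eu n) : ℝ :=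
  ψ (A x - b)

/-- `∇f(x) = Aᵀ ∇ψ(Ax - b)`. -/
def gradfval {n m : ℕ} (gradψ : Eu m → Eu m) (A : Eu n →L[ℝ] Eu m) (b : Eu m)
    (x : Eu n) : Eu n :=
  ContinuousLinearMap.adjoint A (gradψ (A x - b))

/-- `∇²f(x) = Aᵀ ∇²ψ(Ax - b) A`. -/
def hessfval {n m : ℕ} (hessψ : Eu m → (Eu m →L[ℝ] Eu m)) (A : Eu n →L[ℝ] Eu m) (b : Eu m)
    (x : Eu n) : Eu n →L[ℝ] Eu n :=
  (ContinuousLinearMap.adjoint A).comp ((hessψ (A x - b)).comp A)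

/-- `F = f + g`, extended-real-valued. -/
def Fval {n m : ℕ} (ψ : Eu m → ℝ) (A : Eu n →L[ℝ] Eu m) (b : Eu m) (g : Eu n → EReal)
    (x : Eu n) : EReal :=
  ((fval ψ A b x : ℝ) : EReal) + g x

/-- The residual mapping `R(x) = x - prox_g(x - ∇f(x))`. -/
def Rres {n m : ℕ} (gradψ : Eu m → Eu m) (A : Eu n →L[ℝ] Eu m) (b : Eu m)
    (prox : Eu n → Eu n) (x : Eu n) : Eu n :=
  x - prox (x - gradfval gradψ A b x)

/-- The KKT residual `r(x) = ‖R(x)‖`. -/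
def rres {n m : ℕ} (gradψ : Eu m → Eu m) (A : Eu n →L[ℝ] Eu m) (b : Eu m)
    (prox : Eu n → Eu n) (x : Eu n) : ℝ :=
  ‖Rres gradψ A b prox x‖

/-- The subdifferential `∂F(x) = ∇f(x) + ∂g(x)`. -/
def subF {n m : ℕ} (gradψ : Eu m → Eu m) (A : Eu n →L[ℝ] Eu m) (b : Eu m)
    (g : Eu n → EReal) (x : Eu n) : Set (Eu n) :=
  {u | u - gradfval gradψ A b x ∈ subdiff g x}

/-- The stationary point set `S* = {x : 0 ∈ ∂F(x)}`. -/
def SstarSet {n m : ℕ} (gradψ : Eu m → Eu m) (A : Eu n →L[ℝ] Eu m) (b : Eu m)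
    (g : Eu n → EReal) : Set (Eu n) :=
  {x | (0 : Eu n) ∈ subF gradψ A b g x}

/-- Smallest eigenvalue of a (self-adjoint) operator, via the Rayleigh quotient. -/
def lamMin {m : ℕ} (T : Eu m →L[ℝ] Eu m) : ℝ :=
  sInf ((fun v => ⟪T v, v⟫) '' Metric.sphere (0 : Eu m) 1)

/-- The strong stationary point set `X* = {x ∈ S* : ∇²ψ(Ax-b) ⪰ 0}`. -/
def XstarSet {n m : ℕ} (gradψ : Eu m → Eu m) (hessψ : Eu m → (Eu m →L[ℝ] Eu m))
    (A : Eu n →L[ℝ] Eu m) (b : Eu m) (g : Eu n → EReal) : Set (Eu n) :=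
  {x | x ∈ SstarSet gradψ A b g ∧ ∀ v : Eu m, 0 ≤ ⟪hessψ (A x - b) v, v⟫}

/-- `ψ` is twice continuously differentiable on `A(O) - b`, with gradient `gradψ`
and Hessian `hessψ` there. -/
def TwiceDiffOn {n m : ℕ} (ψ : Eu m → ℝ) (gradψ : Eu m → Eu m)
    (hessψ : Eu m → (Eu m →L[ℝ] Eu m)) (A : Eu n →L[ℝ] Eu m) (b : Eu m)
    (O : Set (Eu n)) : Prop :=
  (∀ u ∈ (fun z : Eu n => A z - b) '' O, HasGradientAt ψ (gradψ u) u) ∧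
  (∀ u ∈ (fun z : Eu n => A z - b) '' O, HasFDerivAt gradψ (hessψ u) u) ∧
  ContinuousOn gradψ ((fun z : Eu n => A z - b) '' O) ∧
  ContinuousOn hessψ ((fun z : Eu n => A z - b) '' O)

/-- Assumption 1.1 of the paper, together with the data of the proximal map of `g`. -/
def BasicAssumptions {n m : ℕ} (ψ : Eu m → ℝ) (gradψ : Eu m → Eu m)
    (hessψ : Eu m → (Eu m →L[ℝ] Eu m)) (A : Eu n →L[ℝ] Eu m) (b : Eu m)
    (g : Eu n → EReal) (prox : Eu n → Eu n) (O : Set (Eu n)) : Prop :=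
  IsOpen O ∧ domg g ⊆ O ∧ TwiceDiffOn ψ gradψ hessψ A b O ∧
  ProperFun g ∧ ConvexFun g ∧ LowerSemicontinuous g ∧ ContinuousOn g (domg g) ∧
  IsProxOf g prox ∧
  (∃ c : ℝ, ∀ x, (c : EReal) ≤ Fval ψ A b g x) ∧
  (∀ c : ℝ, Bornology.IsBounded {x | Fval ψ A b g x ≤ (c : EReal)})

/-- The regularized Hessian `G_k = ∇²f(x_k) + a₁ [−λ_min(∇²ψ(Ax_k−b))]₊ AᵀA + μ I`. -/
def GkOf {n m : ℕ} (hessψ : Eu m → (Eu m →L[ℝ] Eu m)) (A : Eu n →L[ℝ] Eu m) (b : Eu m)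
    (a₁ μ : ℝ) (xk : Eu n) : Eu n →L[ℝ] Eu n :=
  hessfval hessψ A b xk
    + (a₁ * max 0 (-(lamMin (hessψ (A xk - b))))) • ((ContinuousLinearMap.adjoint A).comp A)
    + μ • (ContinuousLinearMap.id ℝ (Eu n))

/-- `R_k(y) = y - prox_g(y - ∇f(x_k) - G(y - x_k))`. -/
def RkRes {n m : ℕ} (gradψ : Eu m → Eu m) (A : Eu n →L[ℝ] Eu m) (b : Eu m)
    (prox : Eu n → Eu n) (G : Eu n →L[ℝ] Eu n) (xk yy : Eu n) : Eu n :=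
  yy - prox (yy - gradfval gradψ A b xk - G (yy - xk))

/-- `r_k(y) = ‖R_k(y)‖`. -/
def rkRes {n m : ℕ} (gradψ : Eu m → Eu m) (A : Eu n →L[ℝ] Eu m) (b : Eu m)
    (prox : Eu n → Eu n) (G : Eu n →L[ℝ] Eu n) (xk yy : Eu n) : ℝ :=
  ‖RkRes gradψ A b prox G xk yy‖

/-- The subproblem objective
`Θ_k(x) = f(x_k) + ⟨∇f(x_k), x - x_k⟩ + (1/2)⟨x - x_k, G (x - x_k)⟩ + g(x)`. -/
def ThetaK {n m : ℕ} (ψ : Eu m → ℝ) (gradψ : Eu m → Eu m) (A : Eu n →L[ℝ] Eu m) (b : Eu m)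
    (g : Eu n → EReal) (G : Eu n →L[ℝ] Eu n) (xk x : Eu n) : EReal :=
  ((fval ψ A b xk + ⟪gradfval gradψ A b xk, x - xk⟫
      + ⟪x - xk, G (x - xk)⟫ / 2 : ℝ) : EReal) + g x

/-- The Armijo descent condition `F(x_k) - F(x_k + βᵐ d) ≥ σ βᵐ μ ‖d‖²`. -/
def ArmijoOK {n m : ℕ} (ψ : Eu m → ℝ) (A : Eu n →L[ℝ] Eu m) (b : Eu m) (g : Eu n → EReal)
    (σ β μ : ℝ) (xk dk : Eu n) (M : ℕ) : Prop :=
  Fval ψ A b g (xk + β ^ M • dk) + ((σ * β ^ M * μ * ‖dk‖ ^ 2 : ℝ) : EReal)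
    ≤ Fval ψ A b g xk

/-- `hessψ` is strictly continuous at `u0` relative to `S` with modulus `Lψ`. -/
def StrictContAt {m : ℕ} (hessψ : Eu m → (Eu m →L[ℝ] Eu m)) (S : Set (Eu m)) (u0 : Eu m)
    (Lψ : ℝ) : Prop :=
  0 ≤ Lψ ∧ ∃ δ₀ > (0 : ℝ), ∀ z ∈ Metric.closedBall u0 δ₀ ∩ S,
    ∀ z' ∈ Metric.closedBall u0 δ₀ ∩ S, ‖hessψ z - hessψ z'‖ ≤ Lψ * ‖z - z'‖

/-- The KL property of `F = f + g` at `xbar` (general desingularizing function `φ`). -/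
def KLatGen {n m : ℕ} (ψ : Eu m → ℝ) (gradψ : Eu m → Eu m) (A : Eu n →L[ℝ] Eu m) (b : Eu m)
    (g : Eu n → EReal) (xbar : Eu n) : Prop :=
  ∃ δ > (0 : ℝ), ∃ ϖ : EReal, 0 < ϖ ∧ ∃ φ dφ : ℝ → ℝ,
    φ 0 = 0 ∧
    ContinuousOn φ {t : ℝ | 0 ≤ t ∧ (t : EReal) < ϖ} ∧
    ConcaveOn ℝ {t : ℝ | 0 ≤ t ∧ (t : EReal) < ϖ} φ ∧
    (∀ t : ℝ, 0 < t → (t : EReal) < ϖ → HasDerivAt φ (dφ t) t ∧ 0 < dφ t) ∧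
    ∀ z ∈ Metric.closedBall xbar δ,
      Fval ψ A b g xbar < Fval ψ A b g z → Fval ψ A b g z < Fval ψ A b g xbar + ϖ →
        ∀ v ∈ subF gradψ A b g z,
          1 ≤ dφ ((Fval ψ A b g z - Fval ψ A b g xbar).toReal) * ‖v‖

/-- The KL property of `F = f + g` with exponent `θ` at `xbar`. -/
def KLexpAt {n m : ℕ} (ψ : Eu m → ℝ) (gradψ : Eu m → Eu m) (A : Eu n →L[ℝ] Eu m) (b : Eu m)
    (g : Eu n → EReal) (θ : ℝ) (xbar : Eu n) : Prop :=
  ∃ δ > (0 : ℝ), ∃ ϖ : EReal, 0 < ϖ ∧ ∃ c > (0 : ℝ),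
    ∀ z ∈ Metric.closedBall xbar δ,
      Fval ψ A b g xbar < Fval ψ A b g z → Fval ψ A b g z < Fval ψ A b g xbar + ϖ →
        ∀ v ∈ subF gradψ A b g z,
          1 ≤ c * (1 - θ) * ((Fval ψ A b g z - Fval ψ A b g xbar).toReal) ^ (-θ) * ‖v‖

-- finiteness of g at prox points
lemma prox_ne_top {n : ℕ} {g : Eu n → EReal} {prox : Eu n → Eu n}
    (hp : ProperFun g) (hprox : IsProxOf g prox) (z : Eu n) : g (prox z) ≠ ⊤ := by
  obtain ⟨x₀, hx₀⟩ := hp.1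
  have h1 := hprox z x₀
  intro h
  rw [h] at h1
  rw [EReal.add_top_of_ne_bot (EReal.coe_ne_bot _)] at h1
  have hx0' : g x₀ = ((g x₀).toReal : EReal) := (EReal.coe_toReal hx₀ (hp.2 x₀)).symm
  rw [hx0', ← EReal.coe_add, top_le_iff] at h1
  exact EReal.coe_ne_top _ h1

lemma subdiff_ne_top {n : ℕ} {g : Eu n → EReal} {x v : Eu n}
    (hp : ProperFun g) (hv : v ∈ subdiff g x) : g x ≠ ⊤ := by
  obtain ⟨x₀, hx₀⟩ := hp.1
  intro h
  have h1 := hv x₀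
  rw [h, EReal.top_add_coe, top_le_iff] at h1
  exact hx₀ h1

lemma prox_subdiff {n : ℕ} {g : Eu n → EReal} {prox : Eu n → Eu n}
    (hp : ProperFun g) (hc : ConvexFun g) (hprox : IsProxOf g prox) (z : Eu n) :
    (z - prox z) ∈ subdiff g (prox z) := by
  set u := prox z with hu
  have hgu_top : g u ≠ ⊤ := prox_ne_top hp hprox z
  set gu : ℝ := (g u).toReal with hgu
  have hgueq : g u = (gu : EReal) := (EReal.coe_toReal hgu_top (hp.2 u)).symm
  intro w
  by_cases hw : g w = ⊤
  · rw [hw]; exact le_top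
  set gw : ℝ := (g w).toReal with hgw
  have hgweq : g w = (gw : EReal) := (EReal.coe_toReal hw (hp.2 w)).symm
  rw [hgueq, hgweq, ← EReal.coe_add, EReal.coe_le_coe_iff]
  -- real inequality: gu + ⟪z - u, w - u⟫ ≤ gw
  have key : ∀ t : ℝ, 0 < t → t ≤ 1 →
      0 ≤ ⟪u - z, w - u⟫ + t * (‖w - u‖ ^ 2 / 2) + (gw - gu) := by
    intro t ht ht1
    have hconv := hc u w (1 - t) t (by linarith) (le_of_lt ht) (by ring)
    have hproxineq := hprox z ((1 - t) • u + t • w)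
    rw [← hu] at hproxineq
    have hseg : (1 - t) • u + t • w - z = (u - z) + t • (w - u) := by module
    have hnorm : ‖(1 - t) • u + t • w - z‖ ^ 2
        = ‖u - z‖ ^ 2 + 2 * (t * ⟪u - z, w - u⟫) + t ^ 2 * ‖w - u‖ ^ 2 := by
      rw [hseg, norm_add_sq_real, real_inner_smul_right, norm_smul]
      simp [abs_of_pos ht, mul_pow]
    have hchain : ((‖u - z‖ ^ 2 / 2 : ℝ) : EReal) + (gu : EReal)
        ≤ ((‖(1 - t) • u + t • w - z‖ ^ 2 / 2 + ((1 - t) * gu + t * gw) : ℝ) : EReal) := by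
      calc ((‖u - z‖ ^ 2 / 2 : ℝ) : EReal) + (gu : EReal)
          ≤ ((‖(1 - t) • u + t • w - z‖ ^ 2 / 2 : ℝ) : EReal) + g ((1 - t) • u + t • w) := by
            rw [← hgueq]; exact hproxineq
        _ ≤ ((‖(1 - t) • u + t • w - z‖ ^ 2 / 2 : ℝ) : EReal)
              + (((1 - t) * gu + t * gw : ℝ) : EReal) := by
            refine add_le_add le_rfl ?_
            calc g ((1 - t) • u + t • w) ≤ ((1 - t : ℝ) : EReal) * g u + ((t : ℝ) : EReal) * g w := hconv
              _ = (((1 - t) * gu + t * gw : ℝ) : EReal) := by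
                  rw [hgueq, hgweq, ← EReal.coe_mul, ← EReal.coe_mul, ← EReal.coe_add]
        _ = ((‖(1 - t) • u + t • w - z‖ ^ 2 / 2 + ((1 - t) * gu + t * gw) : ℝ) : EReal) := by
            rw [← EReal.coe_add]
    rw [← EReal.coe_add, EReal.coe_le_coe_iff] at hchain
    rw [hnorm] at hchain
    nlinarith [hchain]
  -- pass to the limit t → 0⁺
  have hc0 : 0 ≤ ⟪u - z, w - u⟫ + (gw - gu) := by
    by_contra hcon
    push_neg at hcon
    set c : ℝ := ⟪u - z, w - u⟫ + (gw - gu) with hcdef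
    set B : ℝ := ‖w - u‖ ^ 2 / 2 with hBdef
    have hB : 0 ≤ B := by positivity
    set t : ℝ := min 1 ((-c / 2) / (B + 1)) with htdef
    have hct : 0 < -c / 2 := by linarith
    have ht0 : 0 < t := lt_min one_pos (div_pos hct (by linarith))
    have ht1 : t ≤ 1 := min_le_left _ _
    have h2 := key t ht0 ht1
    have htB : t * B ≤ -c / 2 := by
      have h3 : t ≤ (-c / 2) / (B + 1) := min_le_right _ _
      calc t * B ≤ ((-c / 2) / (B + 1)) * B := by
            apply mul_le_mul_of_nonneg_right h3 hB
        _ ≤ -c / 2 := by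
            rw [div_mul_eq_mul_div, div_le_iff₀ (by linarith)]
            nlinarith [hct]
    have : ⟪u - z, w - u⟫ + t * B + (gw - gu) = c + t * B := by rw [hcdef]; ring
    rw [this] at h2
    linarith
  have : ⟪z - u, w - u⟫ = -⟪u - z, w - u⟫ := by
    rw [← inner_neg_left]; congr 1; abel
  rw [this]; linarith

lemma prox_unique {n : ℕ} {g : Eu n → EReal} {prox : Eu n → Eu n}
    (hp : ProperFun g) (hc : ConvexFun g) (hprox : IsProxOf g prox)
    {w u : Eu n} (hu : (w - u) ∈ subdiff g u) : prox w = u := by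
  set u' := prox w with hu'
  have hsd' := prox_subdiff hp hc hprox w
  rw [← hu'] at hsd'
  have hgu_top : g u ≠ ⊤ := subdiff_ne_top hp hu
  have hgu'_top : g u' ≠ ⊤ := prox_ne_top hp hprox w
  set gu : ℝ := (g u).toReal
  set gu' : ℝ := (g u').toReal
  have hgueq : g u = (gu : EReal) := (EReal.coe_toReal hgu_top (hp.2 u)).symm
  have hgu'eq : g u' = (gu' : EReal) := (EReal.coe_toReal hgu'_top (hp.2 u')).symm
  have h1 := hu u'
  have h2 := hsd' u
  rw [hgueq, hgu'eq, ← EReal.coe_add, EReal.coe_le_coe_iff] at h1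
  rw [hgu'eq, hgueq, ← EReal.coe_add, EReal.coe_le_coe_iff] at h2
  have hinner : ⟪w - u, u' - u⟫ + ⟪w - u', u - u'⟫ = ‖u' - u‖ ^ 2 := by
    have e1 : ⟪w - u', u - u'⟫ = -⟪w - u', u' - u⟫ := by
      rw [← inner_neg_right]; congr 1; abel
    rw [e1]
    have e2 : ⟪w - u, u' - u⟫ - ⟪w - u', u' - u⟫ = ⟪u' - u, u' - u⟫ := by
      rw [← inner_sub_left]; congr 1; abel
    have e3 : ⟪u' - u, u' - u⟫ = ‖u' - u‖ ^ 2 := real_inner_self_eq_norm_sq _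
    linarith [e2, e3]
  have : ‖u' - u‖ ^ 2 ≤ 0 := by linarith
  have : u' - u = 0 := by
    have := norm_eq_zero.mp (by nlinarith [norm_nonneg (u' - u), sq_nonneg ‖u' - u‖] : ‖u' - u‖ = 0)
    exact this
  rw [← hu'] at *
  exact sub_eq_zero.mp this

lemma prox_nonexpansive {n : ℕ} {g : Eu n → EReal} {prox : Eu n → Eu n}
    (hp : ProperFun g) (hc : ConvexFun g) (hprox : IsProxOf g prox) (z₁ z₂ : Eu n) :
    ‖prox z₁ - prox z₂‖ ≤ ‖z₁ - z₂‖ := by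
  set p₁ := prox z₁
  set p₂ := prox z₂
  have h1 := prox_subdiff hp hc hprox z₁
  have h2 := prox_subdiff hp hc hprox z₂
  have hg1 : g p₁ ≠ ⊤ := prox_ne_top hp hprox z₁
  have hg2 : g p₂ ≠ ⊤ := prox_ne_top hp hprox z₂
  set g1 : ℝ := (g p₁).toReal
  set g2 : ℝ := (g p₂).toReal
  have hg1e : g p₁ = (g1 : EReal) := (EReal.coe_toReal hg1 (hp.2 p₁)).symm
  have hg2e : g p₂ = (g2 : EReal) := (EReal.coe_toReal hg2 (hp.2 p₂)).symm
  have i1 := h1 p₂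
  have i2 := h2 p₁
  rw [hg1e, hg2e, ← EReal.coe_add, EReal.coe_le_coe_iff] at i1
  rw [hg2e, hg1e, ← EReal.coe_add, EReal.coe_le_coe_iff] at i2
  have hsum : ⟪z₁ - p₁, p₂ - p₁⟫ + ⟪z₂ - p₂, p₁ - p₂⟫ ≤ 0 := by linarith
  have key : ‖p₁ - p₂‖ ^ 2 ≤ ⟪z₁ - z₂, p₁ - p₂⟫ := by
    have e1 : ⟪z₁ - p₁, p₂ - p₁⟫ = -⟪z₁ - p₁, p₁ - p₂⟫ := by
      rw [← inner_neg_right]; congr 1; abel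
    have e2 : ⟪z₁ - p₁, p₁ - p₂⟫ - ⟪z₂ - p₂, p₁ - p₂⟫ = ⟪(z₁ - z₂) - (p₁ - p₂), p₁ - p₂⟫ := by
      rw [← inner_sub_left]; congr 1; abel
    have e3 : ⟪(z₁ - z₂) - (p₁ - p₂), p₁ - p₂⟫
        = ⟪z₁ - z₂, p₁ - p₂⟫ - ‖p₁ - p₂‖ ^ 2 := by
      rw [inner_sub_left, real_inner_self_eq_norm_sq]
    linarith [e1, e2, e3, hsum]
  have hcs : ⟪z₁ - z₂, p₁ - p₂⟫ ≤ ‖z₁ - z₂‖ * ‖p₁ - p₂‖ := real_inner_le_norm _ _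
  by_cases hz : ‖p₁ - p₂‖ = 0
  · rw [hz]; exact norm_nonneg _
  · have hpos : 0 < ‖p₁ - p₂‖ := lt_of_le_of_ne (norm_nonneg _) (Ne.symm hz)
    nlinarith [key, hcs]

end

noncomputable section

/-- Lemma 2.1, first part. If `∂F` is `q`-subregular at `x̄ ∈ S*` for `0`,
then the residual mapping `R` is `min{q,1}`-subregular at `x̄` for `0`. -/
theorem statement1 {n m : ℕ} (ψ : Eu m → ℝ) (gradψ : Eu m → Eu m)
    (hessψ : Eu m → (Eu m →L[ℝ] Eu m)) (A : Eu n →L[ℝ] Eu m) (b : Eu m)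
    (g : Eu n → EReal) (prox : Eu n → Eu n) (O : Set (Eu n))
    (hbasic : BasicAssumptions ψ gradψ hessψ A b g prox O)
    (xbar : Eu n) (hxbar : xbar ∈ SstarSet gradψ A b g)
    (q : ℝ) (hq : 0 < q)
    (hball : ∃ δ > (0 : ℝ), Metric.closedBall xbar δ ⊆ O)
    (hsub : ∃ κ > (0 : ℝ), ∃ δ > (0 : ℝ), ∀ z ∈ Metric.closedBall xbar δ,
        ∀ v ∈ subF gradψ A b g z,
          Metric.infDist z (SstarSet gradψ A b g) ≤ κ * ‖v‖ ^ q) :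
    ∃ ν > (0 : ℝ), ∃ δ > (0 : ℝ), ∀ z ∈ Metric.closedBall xbar δ,
      Metric.infDist z (SstarSet gradψ A b g)
        ≤ ν * (rres gradψ A b prox z) ^ (min q 1) := by
  obtain ⟨hO_open, hdom, hT, hproper, hconv, -, -, hproxg, -, -⟩ := hbasic
  obtain ⟨δO, hδO, hballO⟩ := hball
  obtain ⟨κ, hκ, δ₁, hδ₁, hsub⟩ := hsub
  have hsub_xbar : (0 : Eu n) - gradfval gradψ A b xbar ∈ subdiff g xbar := hxbar
  have hgxbar_top : g xbar ≠ ⊤ := subdiff_ne_top hproper hsub_xbar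
  have hxO : xbar ∈ O := hdom hgxbar_top
  set T : Set (Eu m) := (fun z : Eu n => A z - b) '' O with hTdef
  set u₀ : Eu m := A xbar - b with hu₀def
  have hu₀T : u₀ ∈ T := ⟨xbar, hxO, rfl⟩
  have hcont : ContinuousWithinAt hessψ T u₀ := hT.2.2.2 u₀ hu₀T
  obtain ⟨ε, hε, hεball⟩ : ∃ ε > (0:ℝ), ∀ u ∈ T ∩ Metric.ball u₀ ε,
      ‖hessψ u‖ ≤ ‖hessψ u₀‖ + 1 := by
    obtain ⟨ε, hε, h⟩ := Metric.tendsto_nhdsWithin_nhds.mp hcont 1 one_pos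
    refine ⟨ε, hε, ?_⟩
    rintro u ⟨huT, hub⟩
    have h1 := h huT (Metric.mem_ball.mp hub)
    have h2 : ‖hessψ u‖ - ‖hessψ u₀‖ ≤ ‖hessψ u - hessψ u₀‖ := norm_sub_norm_le _ _
    rw [dist_eq_norm] at h1
    linarith
  set K : ℝ := ‖hessψ u₀‖ + 1 with hKdef
  have hK : 0 < K := by positivity
  set δ₂ : ℝ := min δO (ε / (2 * (‖A‖ + 1))) with hδ₂def
  have hδ₂ : 0 < δ₂ := lt_min hδO (by positivity)
  have hδ₂O : Metric.closedBall xbar δ₂ ⊆ O :=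
    le_trans (Metric.closedBall_subset_closedBall (min_le_left _ _)) hballO
  have hmap : ∀ x ∈ Metric.closedBall xbar δ₂, A x - b ∈ T ∩ Metric.ball u₀ ε := by
    intro x hx
    refine ⟨⟨x, hδ₂O hx, rfl⟩, ?_⟩
    rw [Metric.mem_ball, dist_eq_norm]
    have hAx : A x - b - u₀ = A (x - xbar) := by rw [hu₀def, map_sub]; abel
    have hxd : ‖x - xbar‖ ≤ δ₂ := by
      rw [Metric.mem_closedBall, dist_eq_norm] at hx; exact hx
    have hδ₂ε : δ₂ ≤ ε / (2 * (‖A‖ + 1)) := min_le_right _ _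
    calc ‖A x - b - u₀‖ = ‖A (x - xbar)‖ := by rw [hAx]
      _ ≤ ‖A‖ * ‖x - xbar‖ := A.le_opNorm _
      _ ≤ ‖A‖ * (ε / (2 * (‖A‖ + 1))) := by
          exact mul_le_mul_of_nonneg_left (le_trans hxd hδ₂ε) (norm_nonneg _)
      _ < ε := by
          rw [mul_div_assoc', div_lt_iff₀ (by positivity)]
          nlinarith [norm_nonneg A, hε]
  set s : Set (Eu m) := (fun x : Eu n => A x - b) '' Metric.closedBall xbar δ₂ with hsdef
  have hs_convex : Convex ℝ s := by
    rintro - ⟨x, hx, rfl⟩ - ⟨y, hy, rfl⟩ a c ha hc hac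
    refine ⟨a • x + c • y, (convex_closedBall xbar δ₂) hx hy ha hc hac, ?_⟩
    have hb : a • b + c • b = b := by rw [← add_smul, hac, one_smul]
    show A (a • x + c • y) - b = a • (A x - b) + c • (A y - b)
    have h2 : a • (A x - b) + c • (A y - b) = (a • A x + c • A y) - (a • b + c • b) := by
      module
    rw [h2, hb, map_add, A.map_smul, A.map_smul]
  have hs_sub : s ⊆ T ∩ Metric.ball u₀ ε := by
    rintro - ⟨x, hx, rfl⟩; exact hmap x hx
  have hderiv : ∀ u ∈ s, HasFDerivWithinAt gradψ (hessψ u) s u := by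
    intro u hu
    exact (hT.2.1 u (hs_sub hu).1).hasFDerivWithinAt
  have hbound : ∀ u ∈ s, ‖hessψ u‖ ≤ K := fun u hu => hεball u (hs_sub hu)
  have hgradLip : ∀ x ∈ Metric.closedBall xbar δ₂, ∀ y ∈ Metric.closedBall xbar δ₂,
      ‖gradψ (A y - b) - gradψ (A x - b)‖ ≤ K * ‖(A y - b) - (A x - b)‖ := by
    intro x hx y hy
    exact hs_convex.norm_image_sub_le_of_norm_hasFDerivWithin_le hderiv hbound
      ⟨x, hx, rfl⟩ ⟨y, hy, rfl⟩
  set L : ℝ := ‖(ContinuousLinearMap.adjoint A : Eu m →L[ℝ] Eu n)‖ * (K * ‖A‖) with hLdef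
  have hL0 : 0 ≤ L := by rw [hLdef]; positivity
  have hfLip : ∀ x ∈ Metric.closedBall xbar δ₂, ∀ y ∈ Metric.closedBall xbar δ₂,
      ‖gradfval gradψ A b y - gradfval gradψ A b x‖ ≤ L * ‖y - x‖ := by
    intro x hx y hy
    have h1 : gradfval gradψ A b y - gradfval gradψ A b x
        = (ContinuousLinearMap.adjoint A) (gradψ (A y - b) - gradψ (A x - b)) := by
      rw [map_sub]; rfl
    rw [h1]
    calc ‖(ContinuousLinearMap.adjoint A) (gradψ (A y - b) - gradψ (A x - b))‖
        ≤ ‖(ContinuousLinearMap.adjoint A : Eu m →L[ℝ] Eu n)‖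
            * ‖gradψ (A y - b) - gradψ (A x - b)‖ := (ContinuousLinearMap.adjoint A).le_opNorm _
      _ ≤ ‖(ContinuousLinearMap.adjoint A : Eu m →L[ℝ] Eu n)‖
            * (K * ‖(A y - b) - (A x - b)‖) := by
          exact mul_le_mul_of_nonneg_left (hgradLip x hx y hy) (norm_nonneg _)
      _ ≤ ‖(ContinuousLinearMap.adjoint A : Eu m →L[ℝ] Eu n)‖ * (K * (‖A‖ * ‖y - x‖)) := by
          have h2 : (A y - b) - (A x - b) = A (y - x) := by rw [map_sub]; abel
          have h3 : ‖(A y - b) - (A x - b)‖ ≤ ‖A‖ * ‖y - x‖ := by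
            rw [h2]; exact A.le_opNorm _
          exact mul_le_mul_of_nonneg_left
            (mul_le_mul_of_nonneg_left h3 (le_of_lt hK)) (norm_nonneg _)
      _ = L * ‖y - x‖ := by rw [hLdef]; ring
  have hfix : prox (xbar - gradfval gradψ A b xbar) = xbar := by
    apply prox_unique hproper hconv hproxg
    have h0 : xbar - gradfval gradψ A b xbar - xbar = 0 - gradfval gradψ A b xbar := by abel
    rw [h0]; exact hsub_xbar
  set δ : ℝ := min δ₂ (min 1 (min δ₁ δ₂) / (3 + L)) with hδdef
  have hδpos : 0 < δ :=
    lt_min hδ₂ (div_pos (lt_min one_pos (lt_min hδ₁ hδ₂)) (by linarith))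
  have hνpos : (0:ℝ) < 1 + κ * (1 + L) ^ q := by
    have : (0:ℝ) ≤ κ * (1 + L) ^ q :=
      mul_nonneg (le_of_lt hκ) (Real.rpow_nonneg (by linarith) q)
    linarith
  refine ⟨1 + κ * (1 + L) ^ q, hνpos, δ, hδpos, ?_⟩
  intro z hz
  have hzδ₂ : z ∈ Metric.closedBall xbar δ₂ :=
    Metric.closedBall_subset_closedBall (min_le_left _ _) hz
  set p : Eu n := prox (z - gradfval gradψ A b z) with hpdef
  set r : ℝ := ‖z - p‖ with hrdef
  have hr_eq : rres gradψ A b prox z = r := rfl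
  have hzx : ‖z - xbar‖ ≤ δ := by
    rw [Metric.mem_closedBall, dist_eq_norm] at hz; exact hz
  have hxbar_ball : xbar ∈ Metric.closedBall xbar δ₂ :=
    Metric.mem_closedBall_self (le_of_lt hδ₂)
  have hgrad_zx : ‖gradfval gradψ A b xbar - gradfval gradψ A b z‖ ≤ L * ‖xbar - z‖ :=
    hfLip z hzδ₂ xbar hxbar_ball
  have hxz' : ‖xbar - z‖ = ‖z - xbar‖ := norm_sub_rev _ _
  have hxp : ‖xbar - p‖ ≤ (1 + L) * ‖z - xbar‖ := by
    calc ‖xbar - p‖ = ‖prox (xbar - gradfval gradψ A b xbar)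
          - prox (z - gradfval gradψ A b z)‖ := by rw [hfix]
      _ ≤ ‖(xbar - gradfval gradψ A b xbar) - (z - gradfval gradψ A b z)‖ :=
          prox_nonexpansive hproper hconv hproxg _ _
      _ = ‖(xbar - z) - (gradfval gradψ A b xbar - gradfval gradψ A b z)‖ := by
          congr 1; abel
      _ ≤ ‖xbar - z‖ + ‖gradfval gradψ A b xbar - gradfval gradψ A b z‖ := norm_sub_le _ _
      _ ≤ ‖xbar - z‖ + L * ‖xbar - z‖ := by linarith
      _ = (1 + L) * ‖z - xbar‖ := by rw [hxz']; ring
  have hrb : r ≤ (2 + L) * δ := by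
    have h4 : z - p = (z - xbar) + (xbar - p) := by abel
    calc r = ‖(z - xbar) + (xbar - p)‖ := by rw [hrdef, h4]
      _ ≤ ‖z - xbar‖ + ‖xbar - p‖ := norm_add_le _ _
      _ ≤ ‖z - xbar‖ + (1 + L) * ‖z - xbar‖ := by linarith
      _ = (2 + L) * ‖z - xbar‖ := by ring
      _ ≤ (2 + L) * δ := by
          exact mul_le_mul_of_nonneg_left hzx (by linarith)
  have hδsmall : (3 + L) * δ ≤ min 1 (min δ₁ δ₂) := by
    have h5 : δ ≤ min 1 (min δ₁ δ₂) / (3 + L) := min_le_right _ _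
    rw [le_div_iff₀ (by linarith)] at h5
    linarith
  have hr1 : r ≤ 1 := by
    calc r ≤ (2 + L) * δ := hrb
      _ ≤ (3 + L) * δ := mul_le_mul_of_nonneg_right (by linarith) (le_of_lt hδpos)
      _ ≤ min 1 (min δ₁ δ₂) := hδsmall
      _ ≤ 1 := min_le_left _ _
  have hpball : ‖p - xbar‖ ≤ min δ₁ δ₂ := by
    have h6 : p - xbar = (p - z) + (z - xbar) := by abel
    have h7 : ‖p - z‖ = r := by rw [hrdef, norm_sub_rev]
    calc ‖p - xbar‖ = ‖(p - z) + (z - xbar)‖ := by rw [h6]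
      _ ≤ ‖p - z‖ + ‖z - xbar‖ := norm_add_le _ _
      _ ≤ (2 + L) * δ + δ := by rw [h7]; linarith
      _ = (3 + L) * δ := by ring
      _ ≤ min 1 (min δ₁ δ₂) := hδsmall
      _ ≤ min δ₁ δ₂ := min_le_right _ _
  have hpδ₁ : p ∈ Metric.closedBall xbar δ₁ := by
    rw [Metric.mem_closedBall, dist_eq_norm]
    exact le_trans hpball (min_le_left _ _)
  have hpδ₂ : p ∈ Metric.closedBall xbar δ₂ := by
    rw [Metric.mem_closedBall, dist_eq_norm]
    exact le_trans hpball (min_le_right _ _)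
  set v : Eu n := (z - p) + (gradfval gradψ A b p - gradfval gradψ A b z) with hvdef
  have hvsub : v ∈ subF gradψ A b g p := by
    show v - gradfval gradψ A b p ∈ subdiff g p
    have h8 : v - gradfval gradψ A b p = (z - gradfval gradψ A b z) - p := by
      rw [hvdef]; abel
    rw [h8, hpdef]
    exact prox_subdiff hproper hconv hproxg (z - gradfval gradψ A b z)
  have hvnorm : ‖v‖ ≤ (1 + L) * r := by
    have h9 : ‖gradfval gradψ A b p - gradfval gradψ A b z‖ ≤ L * ‖p - z‖ :=
      hfLip z hzδ₂ p hpδ₂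
    have h10 : ‖p - z‖ = r := by rw [hrdef, norm_sub_rev]
    calc ‖v‖ ≤ ‖z - p‖ + ‖gradfval gradψ A b p - gradfval gradψ A b z‖ := norm_add_le _ _
      _ ≤ r + L * r := by rw [h10] at h9; rw [← hrdef]; linarith
      _ = (1 + L) * r := by ring
  have hd := hsub p hpδ₁ v hvsub
  have hvq : ‖v‖ ^ q ≤ (1 + L) ^ q * r ^ q := by
    calc ‖v‖ ^ q ≤ ((1 + L) * r) ^ q :=
        Real.rpow_le_rpow (norm_nonneg _) hvnorm (le_of_lt hq)
      _ = (1 + L) ^ q * r ^ q := Real.mul_rpow (by linarith) (norm_nonneg _)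
  have ht0 : 0 < min q 1 := lt_min hq one_pos
  have hr0 : (0:ℝ) ≤ r := norm_nonneg _
  have hrq : r ^ q ≤ r ^ (min q 1) := by
    rcases eq_or_lt_of_le hr0 with h | h
    · rw [← h, Real.zero_rpow (ne_of_gt hq), Real.zero_rpow (ne_of_gt ht0)]
    · exact Real.rpow_le_rpow_of_exponent_ge h hr1 (min_le_left _ _)
  have hrt : r ≤ r ^ (min q 1) := by
    rcases eq_or_lt_of_le hr0 with h | h
    · rw [← h, Real.zero_rpow (ne_of_gt ht0)]
    · calc r = r ^ (1:ℝ) := (Real.rpow_one r).symm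
        _ ≤ r ^ (min q 1) := Real.rpow_le_rpow_of_exponent_ge h hr1 (min_le_right _ _)
  have htri : Metric.infDist z (SstarSet gradψ A b g)
      ≤ Metric.infDist p (SstarSet gradψ A b g) + dist z p :=
    Metric.infDist_le_infDist_add_dist
  have hdzp : dist z p = r := dist_eq_norm _ _
  have hpow0 : (0:ℝ) ≤ (1 + L) ^ q := Real.rpow_nonneg (by linarith) q
  have hchain : κ * ‖v‖ ^ q ≤ κ * ((1 + L) ^ q * r ^ (min q 1)) := by
    have := mul_le_mul_of_nonneg_left hrq hpow0
    have h11 : ‖v‖ ^ q ≤ (1 + L) ^ q * r ^ (min q 1) := le_trans hvq this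
    exact mul_le_mul_of_nonneg_left h11 (le_of_lt hκ)
  rw [hr_eq]
  have hfinal : Metric.infDist z (SstarSet gradψ A b g)
      ≤ κ * ((1 + L) ^ q * r ^ (min q 1)) + r ^ (min q 1) := by
    rw [hdzp] at htri
    linarith
  calc Metric.infDist z (SstarSet gradψ A b g)
      ≤ κ * ((1 + L) ^ q * r ^ (min q 1)) + r ^ (min q 1) := hfinal
    _ = (1 + κ * (1 + L) ^ q) * r ^ (min q 1) := by ring

end
end

section
/- Let x, y ∈ dom g with d := y − x ≠ 0, and let μ > 0, σ ∈ (0, 1/2), β ∈ (0,1). If ⟨∇f(x), y − x⟩ + g(y) − g(x) ≤ −(μ/2)‖y − x‖², then the directional derivative satisfies F′(x; d) ≤ −(μ/2)‖d‖² < 0, and consequently there exists a nonnegative integer m such that the Armijo condition F(x) − F(x + βᵐ d) ≥ σ βᵐ μ ‖d‖² holds. -/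
open Set Metric Filter Bornology
open scoped RealInnerProductSpace Topology ENNReal

noncomputable section


theorem slope_mono_aux {q : ℝ → ℝ}
    (hq : ∀ s t : ℝ, 0 < s → s ≤ t → t ≤ 1 → q s ≤ (1 - s/t) * q 0 + (s/t) * q t) :
    ∀ s t : ℝ, 0 < s → s ≤ t → t ≤ 1 → (q s - q 0)/s ≤ (q t - q 0)/t := by
  intro s t hs hst ht1
  have ht : 0 < t := lt_of_lt_of_le hs hst
  have h1 := hq s t hs hst ht1
  have h2 : q s * t ≤ (t - s) * q 0 + s * q t := by
    have h3 := mul_le_mul_of_nonneg_right h1 ht.le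
    calc q s * t ≤ ((1 - s/t) * q 0 + (s/t) * q t) * t := h3
      _ = (t - s) * q 0 + s * q t := by field_simp
  rw [div_le_div_iff₀ hs ht]
  nlinarith

set_option maxHeartbeats 2000000 in
/-- Lemma 3.1, line-search part. If
`⟨∇f(x), y - x⟩ + g(y) - g(x) ≤ -(μ/2)‖y - x‖²` for `x, y ∈ dom g` with `d = y - x ≠ 0`,
then the one-sided directional derivative `F'(x; d)` (as an extended real limit) satisfies
`F'(x; d) ≤ -(μ/2)‖d‖² < 0`, and the Armijo condition
`F(x) - F(x + βᵐ d) ≥ σ βᵐ μ ‖d‖²` holds for some nonnegative integer `m`. -/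
theorem statement7 {n m : ℕ} (ψ : Eu m → ℝ) (gradψ : Eu m → Eu m)
    (hessψ : Eu m → (Eu m →L[ℝ] Eu m)) (A : Eu n →L[ℝ] Eu m) (b : Eu m)
    (g : Eu n → EReal) (prox : Eu n → Eu n) (O : Set (Eu n))
    (hbasic : BasicAssumptions ψ gradψ hessψ A b g prox O)
    (x yy : Eu n) (hx : x ∈ domg g) (hy : yy ∈ domg g)
    (d : Eu n) (hd : d = yy - x) (hdne : d ≠ 0)
    (μ σ β : ℝ) (hμ : 0 < μ) (hσ : 0 < σ ∧ σ < 1/2) (hβ : 0 < β ∧ β < 1)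
    (hdec : ((⟪gradfval gradψ A b x, yy - x⟫ : ℝ) : EReal) + g yy
        ≤ g x + ((-(μ/2) * ‖yy - x‖ ^ 2 : ℝ) : EReal)) :
    (∃ Fd : EReal,
        Tendsto (fun t : ℝ =>
            (Fval ψ A b g (x + t • d) - Fval ψ A b g x) * (((1/t : ℝ)) : EReal))
          (nhdsWithin 0 (Set.Ioi 0)) (nhds Fd) ∧
        Fd ≤ ((-(μ/2) * ‖d‖ ^ 2 : ℝ) : EReal) ∧
        ((-(μ/2) * ‖d‖ ^ 2 : ℝ) : EReal) < 0) ∧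
    ∃ M : ℕ, ArmijoOK ψ A b g σ β μ x d M := by
  classical
  obtain ⟨hσ0, hσhalf⟩ := hσ
  obtain ⟨hβ0, hβ1⟩ := hβ
  obtain ⟨hO, hdomO, hTD, hproper, hconv, -, -, -, -, -⟩ := hbasic
  have hgbot : ∀ z, g z ≠ ⊥ := hproper.2
  have hgx : g x ≠ ⊤ := hx
  have hgy : g yy ≠ ⊤ := hy
  set p : ℝ → Eu n := fun t => x + t • d with hp
  have hp0 : p 0 = x := by simp [hp]
  have hp1 : p 1 = yy := by simp [hp, hd]
  -- segment points are in dom g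
  have hseg : ∀ t ∈ Icc (0:ℝ) 1, g (p t) ≠ ⊤ := by
    intro t ht
    have h1 : p t = (1 - t) • x + t • yy := by rw [hp, hd]; module
    rw [h1]
    have h2 := hconv x yy (1-t) t (by linarith [ht.2]) ht.1 (by ring)
    intro htop
    rw [htop] at h2
    rw [← EReal.coe_toReal hgx (hgbot x), ← EReal.coe_toReal hgy (hgbot yy),
      ← EReal.coe_mul, ← EReal.coe_mul, ← EReal.coe_add] at h2
    exact (not_le.mpr (EReal.coe_lt_top _)) h2
  set q : ℝ → ℝ := fun t => (g (p t)).toReal with hqdef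
  have hq : ∀ t ∈ Icc (0:ℝ) 1, g (p t) = ((q t : ℝ) : EReal) := by
    intro t ht
    exact (EReal.coe_toReal (hseg t ht) (hgbot _)).symm
  have hq0 : g x = ((q 0 : ℝ) : EReal) := by rw [← hp0]; exact hq 0 ⟨le_refl _, zero_le_one⟩
  have hq1 : g yy = ((q 1 : ℝ) : EReal) := by rw [← hp1]; exact hq 1 ⟨zero_le_one, le_refl _⟩
  -- convexity of q along the segment
  have hqconvE : ∀ s t : ℝ, 0 < s → s ≤ t → t ≤ 1 →
      q s ≤ (1 - s/t) * q 0 + (s/t) * q t := by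
    intro s t hs hst ht1
    have ht : 0 < t := lt_of_lt_of_le hs hst
    have hkey : p s = (1 - s/t) • x + (s/t) • (p t) := by
      have h : (s/t) * t = s := div_mul_cancel₀ s ht.ne'
      rw [hp]
      simp only [smul_add, smul_smul, h]
      module
    have h2 := hconv x (p t) (1 - s/t) (s/t)
      (by rw [sub_nonneg]; exact div_le_one_of_le₀ hst ht.le)
      (by positivity) (by ring)
    rw [← hkey] at h2
    rw [hq s ⟨hs.le, hst.trans ht1⟩, hq t ⟨ht.le, ht1⟩, hq0,
      ← EReal.coe_mul, ← EReal.coe_mul, ← EReal.coe_add, EReal.coe_le_coe_iff] at h2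
    exact h2
  have hslope := slope_mono_aux hqconvE
  set sq : ℝ → ℝ := fun t => (q t - q 0)/t with hsq
  have hsqmono : MonotoneOn sq (Ioo (0:ℝ) 1) := by
    intro s hs t ht hst
    exact hslope s t hs.1 hst ht.2.le
  -- differentiability of f along the segment
  set v : Eu m := A d with hv
  set u : Eu m := A x - b with hu
  have hugrad : HasGradientAt ψ (gradψ u) u := hTD.1 u ⟨x, hdomO hx, rfl⟩
  set fr : ℝ → ℝ := fun t => fval ψ A b (p t) with hfr
  set a0 : ℝ := ⟪gradfval gradψ A b x, d⟫ with ha0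
  have hfr0 : fr 0 = fval ψ A b x := by rw [hfr]; simp [hp0]
  have hcurve : ∀ t : ℝ, A (p t) - b = u + t • v := by
    intro t; rw [hp, hu, hv]; simp [map_add, map_smul]; abel
  have hderiv : HasDerivAt fr a0 0 := by
    have h1 : HasDerivAt (fun t : ℝ => u + t • v) v 0 := by
      simpa using ((hasDerivAt_id (0:ℝ)).smul_const v).const_add u
    have hpsi' : HasFDerivAt ψ ((InnerProductSpace.toDual ℝ (Eu m)) (gradψ u))
        (u + (0:ℝ) • v) := by simpa using hugrad.hasFDerivAt
    have h2 := hpsi'.comp_hasDerivAt 0 h1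
    have h3 : fr = fun t => ψ (u + t • v) := by
      funext t
      show ψ (A (p t) - b) = ψ (u + t • v)
      rw [hcurve t]
    have h4 : a0 = ⟪gradψ u, v⟫ := by
      rw [ha0, hv]
      exact ContinuousLinearMap.adjoint_inner_left A d (gradψ u)
    rw [h3, h4]
    exact h2
  have hfrslope : Tendsto (fun t : ℝ => (fr t - fr 0)/t) (𝓝[>] 0) (𝓝 a0) := by
    have := hasDerivAt_iff_tendsto_slope.mp hderiv
    have h2 := this.mono_left (nhdsWithin_mono 0 (fun t (ht : t ∈ Ioi 0) => ne_of_gt ht))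
    refine h2.congr (fun t => ?_)
    rw [slope_def_field, sub_zero]
  -- the EReal quotient equals the real quotient on (0,1)
  set rQ : ℝ → ℝ := fun t => (fr t - fr 0)/t + sq t with hrQ
  set Q : ℝ → EReal := fun t =>
    (Fval ψ A b g (x + t • d) - Fval ψ A b g x) * (((1/t : ℝ)) : EReal) with hQ
  have hFvt : ∀ t ∈ Icc (0:ℝ) 1, Fval ψ A b g (x + t • d) = ((fr t + q t : ℝ) : EReal) := by
    intro t ht
    rw [Fval, EReal.coe_add]
    congr 1
    exact hq t ht
  have hFv0 : Fval ψ A b g x = ((fr 0 + q 0 : ℝ) : EReal) := by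
    rw [Fval, EReal.coe_add, hfr0, hq0]
  have hQeq : ∀ t ∈ Ioo (0:ℝ) 1, Q t = ((rQ t : ℝ) : EReal) := by
    intro t ht
    rw [hQ]
    simp only
    rw [hFvt t ⟨ht.1.le, ht.2.le⟩, hFv0, ← EReal.coe_sub, ← EReal.coe_mul]
    congr 1
    rw [hrQ, hsq]
    simp only
    field_simp
    ring
  have hIoo : Ioo (0:ℝ) 1 ∈ 𝓝[>] (0:ℝ) := Ioo_mem_nhdsGT_of_mem ⟨le_refl _, one_pos⟩
  -- key fact: sq 1 bound from hdec
  have hdecR : a0 + (q 1 - q 0) ≤ -(μ/2) * ‖d‖ ^ 2 := by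
    have h1 : ((⟪gradfval gradψ A b x, yy - x⟫ : ℝ) : EReal) + ((q 1 : ℝ) : EReal)
        ≤ ((q 0 : ℝ) : EReal) + ((-(μ/2) * ‖yy - x‖ ^ 2 : ℝ) : EReal) := by
      rw [← hq1, ← hq0]; exact hdec
    rw [← EReal.coe_add, ← EReal.coe_add, EReal.coe_le_coe_iff] at h1
    have h2 : yy - x = d := hd.symm
    rw [h2] at h1
    rw [← ha0] at h1
    linarith
  have hdnorm : 0 < ‖d‖ := norm_pos_iff.mpr hdne
  have hsq_le : ∀ t ∈ Ioo (0:ℝ) 1, sq t ≤ q 1 - q 0 := by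
    intro t ht
    have := hslope t 1 ht.1 ht.2.le (le_refl 1)
    simpa [hsq] using this
  -- construct the limit Fd
  have hmain : ∃ Fd : EReal, Tendsto Q (𝓝[>] 0) (𝓝 Fd) ∧
      Fd ≤ ((-(μ/2) * ‖d‖ ^ 2 : ℝ) : EReal) := by
    by_cases hbdd : BddBelow (sq '' Ioo (0:ℝ) 1)
    · set L : ℝ := sInf (sq '' Ioo (0:ℝ) 1) with hL
      have hsqt : Tendsto sq (𝓝[>] 0) (𝓝 L) :=
        MonotoneOn.tendsto_nhdsWithin_Ioo_right ⟨1/2, by norm_num⟩ hsqmono hbdd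
      have hrQt : Tendsto rQ (𝓝[>] 0) (𝓝 (a0 + L)) := hfrslope.add hsqt
      refine ⟨((a0 + L : ℝ) : EReal), ?_, ?_⟩
      · have h1 : Tendsto (fun t => ((rQ t : ℝ) : EReal)) (𝓝[>] 0) (𝓝 ((a0 + L : ℝ) : EReal)) :=
          (continuous_coe_real_ereal.tendsto _).comp hrQt
        exact h1.congr' (by filter_upwards [hIoo] with t ht using (hQeq t ht).symm)
      · rw [EReal.coe_le_coe_iff]
        have hLle : L ≤ sq (1/2) := csInf_le hbdd ⟨1/2, by norm_num, rfl⟩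
        have := hsq_le (1/2) (by norm_num)
        linarith
    · refine ⟨⊥, ?_, bot_le⟩
      rw [EReal.tendsto_nhds_bot_iff_real]
      intro c
      have hev1 : ∀ᶠ t in 𝓝[>] (0:ℝ), (fr t - fr 0)/t < a0 + 1 :=
        hfrslope.eventually_lt_const (by linarith)
      obtain ⟨w, hw, hwlt⟩ : ∃ w ∈ Ioo (0:ℝ) 1, sq w < c - a0 - 1 := by
        by_contra h
        push_neg at h
        exact hbdd ⟨c - a0 - 1, fun y ⟨w, hw, hwy⟩ => hwy ▸ h w hw⟩
      have hev2 : Ioo (0:ℝ) w ∈ 𝓝[>] (0:ℝ) := Ioo_mem_nhdsGT_of_mem ⟨le_refl _, hw.1⟩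
      filter_upwards [hev1, hev2, hIoo] with t ht1 ht2 ht3
      rw [hQeq t ht3]
      have hsqlt : sq t ≤ sq w := hsqmono ht3 hw ht2.2.le
      have : rQ t < c := by rw [hrQ]; simp only; linarith
      exact_mod_cast this
  obtain ⟨Fd, hFdt, hFdle⟩ := hmain
  have hneg : ((-(μ/2) * ‖d‖ ^ 2 : ℝ) : EReal) < 0 := by
    have h1 : 0 < μ/2 * ‖d‖ ^ 2 := by positivity
    have : -(μ/2) * ‖d‖ ^ 2 < 0 := by nlinarith
    exact_mod_cast this
  refine ⟨⟨Fd, hFdt, hFdle, hneg⟩, ?_⟩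
  -- Armijo step
  set c0 : ℝ := -(σ * μ * ‖d‖ ^ 2) with hc0
  have hlt : Fd < ((c0 : ℝ) : EReal) := by
    refine lt_of_le_of_lt hFdle ?_
    have hpos : 0 < ‖d‖ ^ 2 := pow_pos hdnorm 2
    have h5 : 0 < μ/2 - σ * μ := by nlinarith
    have h6 := mul_pos h5 hpos
    have : -(μ/2) * ‖d‖ ^ 2 < c0 := by rw [hc0]; nlinarith
    exact_mod_cast this
  have hevQ : ∀ᶠ t in 𝓝[>] (0:ℝ), Q t < ((c0 : ℝ) : EReal) :=
    hFdt.eventually_lt_const hlt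
  have hpow : Tendsto (fun M : ℕ => β ^ M) atTop (𝓝[>] (0:ℝ)) := by
    rw [tendsto_nhdsWithin_iff]
    exact ⟨tendsto_pow_atTop_nhds_zero_of_lt_one hβ0.le hβ1,
      Eventually.of_forall fun M => pow_pos hβ0 M⟩
  obtain ⟨M, hM1, hM2⟩ := (hpow.eventually (hevQ.and hIoo)).exists
  refine ⟨M, ?_⟩
  set t : ℝ := β ^ M with ht
  have hrQlt : rQ t < c0 := by
    have := hM1
    rw [hQeq t hM2] at this
    exact_mod_cast this
  have ht0 : 0 < t := hM2.1
  have harm : fr t + q t + σ * t * μ * ‖d‖ ^ 2 ≤ fr 0 + q 0 := by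
    have h1 : (fr t - fr 0)/t + (q t - q 0)/t < c0 := hrQlt
    rw [← add_div, div_lt_iff₀ ht0] at h1
    nlinarith
  rw [ArmijoOK, hFvt t ⟨ht0.le, hM2.2.le⟩, hFv0, ← EReal.coe_add, ← ht]
  exact_mod_cast harm


end
end
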